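/- The join operation on ideals distributes over intersection: for ideals I, J, K in a polynomial ring, (I ∩ J) * K = (I * K) ∩ (J * K). -/

import Mathlib

open MvPolynomial

section Core
variable {K : Type*} [Field K] {σ A ι : Type*} [CommRing A] [Algebra K A]

/-- coefficientwise coordinate projection along a basis of `A` over `K`. -/
noncomputable def coeffProj (b : Module.Basis ι K A) (j : ι) (p : MvPolynomial σ A) :
    MvPolynomial σ K :=
  ∑ m ∈ p.support, monomial m (b.repr (coeff m p) j)

lemma coeff_coeffProj (b : Module.Basis ι K A) (j : ι) (p : MvPolynomial σ A) (m : σ →₀ ℕ) :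
    coeff m (coeffProj b j p) = b.repr (coeff m p) j := by
  classical
  rw [coeffProj, coeff_sum]
  simp only [coeff_monomial]
  rw [Finset.sum_ite_eq' p.support m (fun m' => b.repr (coeff m' p) j)]
  by_cases h : m ∈ p.support
  · simp [h]
  · simp [h, MvPolynomial.notMem_support_iff.mp h]

lemma coeffProj_sum {X : Type*} (b : Module.Basis ι K A) (j : ι) (s : Finset X)
    (f : X → MvPolynomial σ A) :
    coeffProj b j (∑ x ∈ s, f x) = ∑ x ∈ s, coeffProj b j (f x) := by
  ext m
  rw [coeff_coeffProj, coeff_sum, coeff_sum]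
  simp only [coeff_coeffProj]
  rw [← Finsupp.finset_sum_apply, ← map_sum]

lemma coeffProj_mul_map (b : Module.Basis ι K A) (j : ι) (u : MvPolynomial σ A)
    (r : MvPolynomial σ K) :
    coeffProj b j (u * MvPolynomial.map (algebraMap K A) r) = coeffProj b j u * r := by
  classical
  ext m
  rw [coeff_coeffProj, coeff_mul, coeff_mul, map_sum, Finsupp.finset_sum_apply]
  apply Finset.sum_congr rfl
  intro x _
  rw [coeff_map, coeff_coeffProj, mul_comm (coeff x.1 u), ← Algebra.smul_def, map_smul,
    Finsupp.smul_apply, smul_eq_mul, mul_comm]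

end Core

section Core2
variable {K : Type*} [Field K] {σ A ι : Type*} [CommRing A] [Algebra K A]

lemma coeffProj_zero (b : Module.Basis ι K A) (j : ι) : coeffProj (σ := σ) b j 0 = 0 := by
  simp [coeffProj]

lemma coeffProj_add (b : Module.Basis ι K A) (j : ι) (p q : MvPolynomial σ A) :
    coeffProj b j (p + q) = coeffProj b j p + coeffProj b j q := by
  ext m
  simp [coeff_coeffProj, coeff_add]

lemma eq_sum_coeffProj (b : Module.Basis ι K A) (p : MvPolynomial σ A) (s : Finset ι)
    (hs : ∀ m : σ →₀ ℕ, (b.repr (coeff m p)).support ⊆ s) :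
    p = ∑ j ∈ s, C (b j) * MvPolynomial.map (algebraMap K A) (coeffProj b j p) := by
  ext m
  rw [coeff_sum]
  simp only [coeff_C_mul, coeff_map, coeff_coeffProj]
  have h1 := Module.Basis.linearCombination_repr b (coeff m p)
  rw [Finsupp.linearCombination_apply,
    Finsupp.sum_of_support_subset _ (hs m) _ (by intro i _; simp)] at h1
  conv_lhs => rw [← h1]
  exact Finset.sum_congr rfl fun j _ => by rw [Algebra.smul_def, mul_comm]

lemma coeffProj_mem (b : Module.Basis ι K A) (I : Ideal (MvPolynomial σ K)) {p : MvPolynomial σ A}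
    (hp : p ∈ Ideal.map
      (MvPolynomial.map (algebraMap K A) : MvPolynomial σ K →+* MvPolynomial σ A) I)
    : ∀ j, coeffProj b j p ∈ I := by
  classical
  haveI := Classical.decEq ι
  rw [Ideal.map] at hp
  induction hp using Submodule.span_induction with
  | mem q hq =>
      obtain ⟨r, hr, rfl⟩ := hq
      intro j
      rw [← one_mul (MvPolynomial.map (algebraMap K A) r), coeffProj_mul_map]
      exact I.mul_mem_left _ hr
  | zero => intro j; rw [coeffProj_zero]; exact I.zero_mem
  | add x y _ _ hx hy => intro j; rw [coeffProj_add]; exact I.add_mem (hx j) (hy j)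
  | smul u x _ hx =>
      intro j
      rw [smul_eq_mul]
      set s : Finset ι := x.support.biUnion (fun m => (b.repr (coeff m x)).support) with hsdef
      have hs : ∀ m : σ →₀ ℕ, (b.repr (coeff m x)).support ⊆ s := by
        intro m
        by_cases hm : m ∈ x.support
        · exact Finset.subset_biUnion_of_mem (fun m => (b.repr (coeff m x)).support) hm
        · rw [MvPolynomial.notMem_support_iff.mp hm]
          simp
      rw [eq_sum_coeffProj b x s hs, Finset.mul_sum, coeffProj_sum]
      apply Ideal.sum_mem
      intro j' _
      rw [← mul_assoc, coeffProj_mul_map]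
      exact I.mul_mem_left _ (hx j')

lemma mem_map_algebraMap_iff (b : Module.Basis ι K A) (I : Ideal (MvPolynomial σ K))
    (p : MvPolynomial σ A) :
    p ∈ Ideal.map
      (MvPolynomial.map (algebraMap K A) : MvPolynomial σ K →+* MvPolynomial σ A) I ↔
    ∀ j, coeffProj b j p ∈ I := by
  classical
  haveI := Classical.decEq ι
  constructor
  · exact fun hp => coeffProj_mem b I hp
  · intro h
    set s : Finset ι := p.support.biUnion (fun m => (b.repr (coeff m p)).support) with hsdef
    have hs : ∀ m : σ →₀ ℕ, (b.repr (coeff m p)).support ⊆ s := by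
      intro m
      by_cases hm : m ∈ p.support
      · exact Finset.subset_biUnion_of_mem (fun m => (b.repr (coeff m p)).support) hm
      · rw [MvPolynomial.notMem_support_iff.mp hm]
        simp
    rw [eq_sum_coeffProj b p s hs]
    apply Ideal.sum_mem
    intro j _
    exact Ideal.mul_mem_left _ _ (Ideal.mem_map_of_mem _ (h j))

lemma map_algebraMap_inf (I J : Ideal (MvPolynomial σ K)) :
    Ideal.map (MvPolynomial.map (algebraMap K A) : MvPolynomial σ K →+* MvPolynomial σ A)
        (I ⊓ J) =
      Ideal.map (MvPolynomial.map (algebraMap K A)) I ⊓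
        Ideal.map (MvPolynomial.map (algebraMap K A)) J := by
  let b := Module.Basis.ofVectorSpace K A
  ext p
  simp only [Submodule.mem_inf, mem_map_algebraMap_iff b, ← forall_and]

end Core2

section JoinSetup
variable (K : Type*) [Field K] (n : ℕ)

/-- the substitution `x_i ↦ y_i + z_i`, `y_i ↦ y_i`, `z_i ↦ z_i` (with `y,z` renamed to
`inl, inr`). -/
noncomputable def psiA : MvPolynomial (Fin n ⊕ (Fin n ⊕ Fin n)) K →ₐ[K]
    MvPolynomial (Fin n ⊕ Fin n) K :=
  aeval (fun v => match v with
    | Sum.inl i => X (Sum.inl i) + X (Sum.inr i)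
    | Sum.inr (Sum.inl i) => X (Sum.inl i)
    | Sum.inr (Sum.inr i) => X (Sum.inr i))

noncomputable def thetaA : MvPolynomial (Fin n ⊕ (Fin n ⊕ Fin n)) K →ₐ[K]
    MvPolynomial (Fin n ⊕ (Fin n ⊕ Fin n)) K :=
  aeval (fun v => match v with
    | Sum.inl i => X (Sum.inr (Sum.inl i)) + X (Sum.inr (Sum.inr i))
    | Sum.inr w => X (Sum.inr w))

/-- the ideal of relations. -/
noncomputable def relS : Ideal (MvPolynomial (Fin n ⊕ (Fin n ⊕ Fin n)) K) :=
  Ideal.span {p : MvPolynomial (Fin n ⊕ (Fin n ⊕ Fin n)) K | ∃ i : Fin n,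
    p = X (Sum.inr (Sum.inl i)) + X (Sum.inr (Sum.inr i)) - X (Sum.inl i)}

lemma theta_eq_rename_psi (f : MvPolynomial (Fin n ⊕ (Fin n ⊕ Fin n)) K) :
    thetaA K n f = rename Sum.inr (psiA K n f) := by
  have h : (rename (Sum.inr : Fin n ⊕ Fin n → Fin n ⊕ (Fin n ⊕ Fin n))).comp (psiA K n)
      = thetaA K n := by
    apply algHom_ext
    rintro (i | i | i) <;> simp [psiA, thetaA]
  rw [← h]
  rfl

lemma sub_theta_mem (f : MvPolynomial (Fin n ⊕ (Fin n ⊕ Fin n)) K) :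
    f - thetaA K n f ∈ relS K n := by
  induction f using MvPolynomial.induction_on with
  | C a => simp [thetaA]
  | add p q hp hq =>
      have h : (p + q) - thetaA K n (p + q) = (p - thetaA K n p) + (q - thetaA K n q) := by
        rw [map_add]; ring
      rw [h]; exact add_mem hp hq
  | mul_X p v hp =>
      have h : p * X v - thetaA K n (p * X v)
          = (p - thetaA K n p) * X v + thetaA K n p * (X v - thetaA K n (X v)) := by
        rw [map_mul]; ring
      rw [h]
      refine add_mem (Ideal.mul_mem_right _ _ hp) (Ideal.mul_mem_left _ _ ?_)
      match v with
      | Sum.inl i =>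
          have : X (Sum.inl i) - thetaA K n (X (Sum.inl i))
              = -(X (Sum.inr (Sum.inl i)) + X (Sum.inr (Sum.inr i)) - X (Sum.inl i)) := by
            simp [thetaA]
          rw [this]
          exact neg_mem (Ideal.subset_span ⟨i, rfl⟩)
      | Sum.inr w => simp [thetaA]

lemma ker_psi_le : RingHom.ker (psiA K n).toRingHom ≤ relS K n := by
  intro f hf
  rw [RingHom.mem_ker] at hf
  have h := sub_theta_mem K n f
  rw [theta_eq_rename_psi] at h
  have hf' : (psiA K n) f = 0 := hf
  rw [hf', map_zero, sub_zero] at h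
  exact h

lemma psi_surjective : Function.Surjective (psiA K n) := by
  intro q
  refine ⟨rename Sum.inr q, ?_⟩
  have h : (psiA K n).comp (rename (Sum.inr : Fin n ⊕ Fin n → Fin n ⊕ (Fin n ⊕ Fin n)))
      = AlgHom.id K _ := by
    apply algHom_ext
    rintro (i | i) <;> simp [psiA]
  calc psiA K n (rename Sum.inr q) = ((psiA K n).comp (rename Sum.inr)) q := rfl
    _ = q := by rw [h]; rfl

end JoinSetup

section Assembly
variable (K : Type*) [Field K] (n : ℕ)

noncomputable def chiR (L : Ideal (MvPolynomial (Fin n) K)) :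
    MvPolynomial (Fin n ⊕ Fin n) K →+* MvPolynomial (Fin n) (MvPolynomial (Fin n) K ⧸ L) :=
  (MvPolynomial.map (Ideal.Quotient.mk L)).comp
    ((sumAlgEquiv K (Fin n) (Fin n)).toRingEquiv :
      MvPolynomial (Fin n ⊕ Fin n) K →+* MvPolynomial (Fin n) (MvPolynomial (Fin n) K))

lemma hEC :
    (((sumAlgEquiv K (Fin n) (Fin n)).toRingEquiv :
        MvPolynomial (Fin n ⊕ Fin n) K →+* MvPolynomial (Fin n) (MvPolynomial (Fin n) K))).comp
      (rename (Sum.inr : Fin n → Fin n ⊕ Fin n)).toRingHom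
    = (C : MvPolynomial (Fin n) K →+* MvPolynomial (Fin n) (MvPolynomial (Fin n) K)) := by
  apply RingHom.ext
  intro r
  have h := DFunLike.congr_fun (sumAlgEquiv_comp_rename_inr K (Fin n) (Fin n)) r
  simpa [algebraMap_eq] using h

lemma chi_surjective (L : Ideal (MvPolynomial (Fin n) K)) :
    Function.Surjective (chiR K n L) := by
  unfold chiR
  rw [RingHom.coe_comp]
  exact (MvPolynomial.map_surjective _ Ideal.Quotient.mk_surjective).comp
    (sumAlgEquiv K (Fin n) (Fin n)).toRingEquiv.surjective

lemma ker_chi (L : Ideal (MvPolynomial (Fin n) K)) :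
    RingHom.ker (chiR K n L)
      = Ideal.map (rename (Sum.inr : Fin n → Fin n ⊕ Fin n)).toRingHom L := by
  unfold chiR
  rw [← RingHom.comap_ker, MvPolynomial.ker_map, Ideal.mk_ker]
  rw [show (Ideal.map (C : MvPolynomial (Fin n) K →+* _) L)
      = Ideal.map ((sumAlgEquiv K (Fin n) (Fin n)).toRingEquiv :
          MvPolynomial (Fin n ⊕ Fin n) K →+* _)
        (Ideal.map (rename (Sum.inr : Fin n → Fin n ⊕ Fin n)).toRingHom L) from by
    rw [Ideal.map_map, hEC K n]]
  exact Ideal.comap_map_of_bijective _ (sumAlgEquiv K (Fin n) (Fin n)).toRingEquiv.bijective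

lemma chi_comp_inl (L : Ideal (MvPolynomial (Fin n) K)) :
    (chiR K n L).comp (rename (Sum.inl : Fin n → Fin n ⊕ Fin n)).toRingHom
      = (MvPolynomial.map (algebraMap K (MvPolynomial (Fin n) K ⧸ L)) :
          MvPolynomial (Fin n) K →+* _) := by
  apply RingHom.ext
  intro r
  have h := DFunLike.congr_fun (sumAlgEquiv_comp_rename_inl K (Fin n) (Fin n)) r
  unfold chiR
  simp only [RingHom.comp_apply, AlgHom.toRingHom_eq_coe, RingHom.coe_coe]
  rw [show ((sumAlgEquiv K (Fin n) (Fin n)).toRingEquiv) ((rename Sum.inl) r)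
      = MvPolynomial.map (algebraMap K (MvPolynomial (Fin n) K)) r from by
    simpa [MvPolynomial.mapAlgHom_apply] using h]
  rw [MvPolynomial.map_map, ← Ideal.Quotient.algebraMap_eq, ← IsScalarTower.algebraMap_eq]

end Assembly

section Master
variable (K : Type*) [Field K] (n : ℕ)

lemma psi_comp_y :
    (psiA K n).toRingHom.comp
        (rename (fun i : Fin n =>
          (Sum.inr (Sum.inl i) : Fin n ⊕ (Fin n ⊕ Fin n)))).toRingHom
      = (rename (Sum.inl : Fin n → Fin n ⊕ Fin n)).toRingHom := by
  have h : (psiA K n).comp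
      (rename (fun i : Fin n => (Sum.inr (Sum.inl i) : Fin n ⊕ (Fin n ⊕ Fin n))))
      = rename (Sum.inl : Fin n → Fin n ⊕ Fin n) := by
    apply algHom_ext; intro i; simp [psiA]
  exact RingHom.ext fun r => DFunLike.congr_fun h r

lemma psi_comp_z :
    (psiA K n).toRingHom.comp
        (rename (fun i : Fin n =>
          (Sum.inr (Sum.inr i) : Fin n ⊕ (Fin n ⊕ Fin n)))).toRingHom
      = (rename (Sum.inr : Fin n → Fin n ⊕ Fin n)).toRingHom := by
  have h : (psiA K n).comp
      (rename (fun i : Fin n => (Sum.inr (Sum.inr i) : Fin n ⊕ (Fin n ⊕ Fin n))))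
      = rename (Sum.inr : Fin n → Fin n ⊕ Fin n) := by
    apply algHom_ext; intro i; simp [psiA]
  exact RingHom.ext fun r => DFunLike.congr_fun h r

end Master

/-- The join `I * J` of two ideals in `K[x_1,...,x_n]`: the elimination ideal
`(I(y) + J(z) + ⟨y_i + z_i - x_i⟩) ∩ K[x]`, realized in the polynomial ring on
`Fin n ⊕ (Fin n ⊕ Fin n)` where `Sum.inl` are the `x`-variables, `Sum.inr ∘ Sum.inl`
the `y`-variables and `Sum.inr ∘ Sum.inr` the `z`-variables. -/
noncomputable def joinIdeal {K : Type*} [Field K] {n : ℕ}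
    (I J : Ideal (MvPolynomial (Fin n) K)) : Ideal (MvPolynomial (Fin n) K) :=
  Ideal.comap (rename (Sum.inl : Fin n → Fin n ⊕ (Fin n ⊕ Fin n)))
    (Ideal.map (rename (fun i : Fin n => (Sum.inr (Sum.inl i) : Fin n ⊕ (Fin n ⊕ Fin n)))) I ⊔
     Ideal.map (rename (fun i : Fin n => (Sum.inr (Sum.inr i) : Fin n ⊕ (Fin n ⊕ Fin n)))) J ⊔
     Ideal.span {p : MvPolynomial (Fin n ⊕ (Fin n ⊕ Fin n)) K | ∃ i : Fin n,
       p = X (Sum.inr (Sum.inl i)) + X (Sum.inr (Sum.inr i)) - X (Sum.inl i)})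

/-- The `r`-th secant ideal `I^{r}`, the `r`-fold join of `I` with itself.
(The `0`-th secant is the irrelevant maximal ideal `⟨x_1,...,x_n⟩`, the identity for join.) -/
noncomputable def secantIdeal {K : Type*} [Field K] {n : ℕ}
    (I : Ideal (MvPolynomial (Fin n) K)) : ℕ → Ideal (MvPolynomial (Fin n) K)
  | 0 => Ideal.span (Set.range X)
  | 1 => I
  | (r + 2) => joinIdeal (secantIdeal I (r + 1)) I



lemma psi_surjective' (K : Type*) [Field K] (n : ℕ) :
    Function.Surjective ⇑(psiA K n).toRingHom := by
  have h : ⇑(psiA K n).toRingHom = ⇑(psiA K n) := rfl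
  rw [h]; exact psi_surjective K n
section Master2
variable (K : Type*) [Field K] (n : ℕ)

lemma joinIdeal_eq_comap (I L : Ideal (MvPolynomial (Fin n) K)) :
    joinIdeal I L
      = Ideal.comap ((chiR K n L).comp ((psiA K n).toRingHom.comp
          (rename (Sum.inl : Fin n → Fin n ⊕ (Fin n ⊕ Fin n))).toRingHom))
        (Ideal.map (MvPolynomial.map (algebraMap K (MvPolynomial (Fin n) K ⧸ L)) :
            MvPolynomial (Fin n) K →+* _) I) := by
  have hjoin : joinIdeal I L = Ideal.comap
      (rename (Sum.inl : Fin n → Fin n ⊕ (Fin n ⊕ Fin n))).toRingHom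
      (Ideal.map (rename (fun i : Fin n =>
          (Sum.inr (Sum.inl i) : Fin n ⊕ (Fin n ⊕ Fin n)))).toRingHom I ⊔
       Ideal.map (rename (fun i : Fin n =>
          (Sum.inr (Sum.inr i) : Fin n ⊕ (Fin n ⊕ Fin n)))).toRingHom L ⊔
       relS K n) := rfl
  set M' : Ideal (MvPolynomial (Fin n ⊕ Fin n) K) :=
    Ideal.map (rename (Sum.inl : Fin n → Fin n ⊕ Fin n)).toRingHom I ⊔
    Ideal.map (rename (Sum.inr : Fin n → Fin n ⊕ Fin n)).toRingHom L with hM'def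
  have hmapS : Ideal.map (psiA K n).toRingHom (relS K n) ≤ ⊥ := by
    rw [relS, Ideal.map_span, Ideal.span_le]
    rintro p ⟨q, ⟨i, rfl⟩, rfl⟩
    simp [psiA]
  have hmapN : Ideal.map (psiA K n).toRingHom
      (Ideal.map (rename (fun i : Fin n =>
          (Sum.inr (Sum.inl i) : Fin n ⊕ (Fin n ⊕ Fin n)))).toRingHom I ⊔
       Ideal.map (rename (fun i : Fin n =>
          (Sum.inr (Sum.inr i) : Fin n ⊕ (Fin n ⊕ Fin n)))).toRingHom L ⊔
       relS K n) = M' := by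
    rw [Ideal.map_sup, Ideal.map_sup, Ideal.map_map, Ideal.map_map, psi_comp_y, psi_comp_z,
      le_bot_iff.mp hmapS, sup_bot_eq]
  have hNcomap : (Ideal.map (rename (fun i : Fin n =>
          (Sum.inr (Sum.inl i) : Fin n ⊕ (Fin n ⊕ Fin n)))).toRingHom I ⊔
       Ideal.map (rename (fun i : Fin n =>
          (Sum.inr (Sum.inr i) : Fin n ⊕ (Fin n ⊕ Fin n)))).toRingHom L ⊔
       relS K n) = Ideal.comap (psiA K n).toRingHom M' := by
    rw [← hmapN, Ideal.comap_map_of_surjective (psiA K n).toRingHom (psi_surjective' K n),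
      ← RingHom.ker_eq_comap_bot]
    exact (sup_eq_left.mpr (le_trans (ker_psi_le K n) le_sup_right)).symm
  have hmapM' : Ideal.map (chiR K n L) M'
      = Ideal.map (MvPolynomial.map (algebraMap K (MvPolynomial (Fin n) K ⧸ L)) :
          MvPolynomial (Fin n) K →+* _) I := by
    rw [hM'def, Ideal.map_sup, Ideal.map_map, Ideal.map_map, chi_comp_inl]
    have h2 : Ideal.map ((chiR K n L).comp
        (rename (Sum.inr : Fin n → Fin n ⊕ Fin n)).toRingHom) L ≤ ⊥ := by
      rw [Ideal.map_le_iff_le_comap]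
      intro l hl
      simp only [Ideal.mem_comap, RingHom.comp_apply]
      have hl2 := DFunLike.congr_fun (hEC K n) l
      rw [RingHom.comp_apply] at hl2
      unfold chiR
      simp only [RingHom.comp_apply]
      rw [hl2, MvPolynomial.map_C]
      rw [show (Ideal.Quotient.mk L) l = 0 from Ideal.Quotient.eq_zero_iff_mem.mpr hl,
        map_zero]
      exact Submodule.zero_mem ⊥
    rw [le_bot_iff.mp h2, sup_bot_eq]
  have hM'comap : M' = Ideal.comap (chiR K n L)
      (Ideal.map (MvPolynomial.map (algebraMap K (MvPolynomial (Fin n) K ⧸ L)) :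
          MvPolynomial (Fin n) K →+* _) I) := by
    rw [← hmapM', Ideal.comap_map_of_surjective _ (chi_surjective K n L),
      ← RingHom.ker_eq_comap_bot, ker_chi]
    exact (sup_eq_left.mpr le_sup_right).symm
  rw [hjoin, hNcomap, hM'comap, Ideal.comap_comap, Ideal.comap_comap]

end Master2

/-- the join distributes over intersection: `(I ∩ J) * L = (I * L) ∩ (J * L)`. -/
theorem stmt_2 (K : Type*) [Field K] (n : ℕ) (I J L : Ideal (MvPolynomial (Fin n) K)) :
    joinIdeal (I ⊓ J) L = joinIdeal I L ⊓ joinIdeal J L := by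
  rw [joinIdeal_eq_comap, joinIdeal_eq_comap, joinIdeal_eq_comap, ← Ideal.comap_inf,
    map_algebraMap_inf]
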